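/- arXiv:1912.05424 — 3 statements merged into one kernel-verified Lean document; each statement's English description precedes it below -/
import Mathlib

section
/- Let A be a commutative ring and n ≥ 3. Then the elementary subgroup E_n(A) generated by elementary transvections is a normal subgroup of GL_n(A). -/
/-- The elementary subgroup `E_n(R) ⊆ GL_n(R)`, generated by the elementary
transvections `e_{ij}(a) = 1 + a·E_{ij}`, `i ≠ j`. -/
def elemGL (n : ℕ) (R : Type*) [CommRing R] : Subgroup (GL (Fin n) R) :=
  Subgroup.closure {g | ∃ (i j : Fin n) (a : R), i ≠ j ∧
    (g : Matrix (Fin n) (Fin n) R) = Matrix.transvection i j a}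

namespace ElemGLAux

open Matrix

variable {n : ℕ} {A : Type*} [CommRing A]


open Matrix

variable {n : ℕ} {A : Type*} [CommRing A]

/-- `M` is the matrix of an element of the elementary subgroup. -/
def IsE (n : ℕ) (A : Type*) [CommRing A] (M : Matrix (Fin n) (Fin n) A) : Prop :=
  ∃ u ∈ elemGL n A, (u : Matrix (Fin n) (Fin n) A) = M

lemma isE_one : IsE n A 1 := ⟨1, one_mem _, rfl⟩

lemma isE_mul {M N : Matrix (Fin n) (Fin n) A} (hM : IsE n A M) (hN : IsE n A N) :
    IsE n A (M * N) := by
  obtain ⟨u, hu, hu'⟩ := hM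
  obtain ⟨v, hv, hv'⟩ := hN
  exact ⟨u * v, mul_mem hu hv, by rw [Units.val_mul, hu', hv']⟩

lemma isE_transvection (i j : Fin n) (hij : i ≠ j) (a : A) :
    IsE n A (Matrix.transvection i j a) := by
  refine ⟨⟨Matrix.transvection i j a, Matrix.transvection i j (-a), ?_, ?_⟩, ?_, rfl⟩
  · rw [transvection_mul_transvection_same _ _ hij, add_neg_cancel, transvection_zero]
  · rw [transvection_mul_transvection_same _ _ hij, neg_add_cancel, transvection_zero]
  · exact Subgroup.subset_closure ⟨i, j, a, hij, rfl⟩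

lemma vecMulVec_mul_vecMulVec (a b c d : Fin n → A) :
    vecMulVec a b * vecMulVec c d = (b ⬝ᵥ c) • vecMulVec a d := by
  ext i j
  simp only [mul_apply, vecMulVec_apply, Matrix.smul_apply, dotProduct, smul_eq_mul, Finset.sum_mul]
  apply Finset.sum_congr rfl
  intros; ring

lemma vecMulVec_add (z w₁ w₂ : Fin n → A) :
    vecMulVec z (w₁ + w₂) = vecMulVec z w₁ + vecMulVec z w₂ := by
  ext i j; simp [vecMulVec_apply, mul_add]

lemma add_vecMulVec (x y w : Fin n → A) :
    vecMulVec (x + y) w = vecMulVec x w + vecMulVec y w := by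
  ext i j; simp [vecMulVec_apply, add_mul]

lemma vecMulVec_zero (z : Fin n → A) : vecMulVec z (0 : Fin n → A) = 0 := by
  ext i j; simp [vecMulVec_apply]

lemma zero_vecMulVec (w : Fin n → A) : vecMulVec (0 : Fin n → A) w = 0 := by
  ext i j; simp [vecMulVec_apply]

lemma neg_vecMulVec (z w : Fin n → A) : vecMulVec (-z) w = -vecMulVec z w := by
  ext i j; simp [vecMulVec_apply]

lemma key_mul (z w₁ w₂ : Fin n → A) (h : w₁ ⬝ᵥ z = 0) :
    (1 + vecMulVec z w₁) * (1 + vecMulVec z w₂) = 1 + vecMulVec z (w₁ + w₂) := by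
  have h0 : vecMulVec z w₁ * vecMulVec z w₂ = 0 := by
    rw [vecMulVec_mul_vecMulVec, h, zero_smul]
  have e : (1 + vecMulVec z w₁) * (1 + vecMulVec z w₂)
      = 1 + vecMulVec z w₁ + vecMulVec z w₂ + vecMulVec z w₁ * vecMulVec z w₂ := by
    noncomm_ring
  rw [e, h0, add_zero, vecMulVec_add, add_assoc]

lemma key_mul' (x y w : Fin n → A) (h : w ⬝ᵥ y = 0) :
    (1 + vecMulVec x w) * (1 + vecMulVec y w) = 1 + vecMulVec (x + y) w := by
  have h0 : vecMulVec x w * vecMulVec y w = 0 := by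
    rw [vecMulVec_mul_vecMulVec, h, zero_smul]
  have e : (1 + vecMulVec x w) * (1 + vecMulVec y w)
      = 1 + vecMulVec x w + vecMulVec y w + vecMulVec x w * vecMulVec y w := by
    noncomm_ring
  rw [e, h0, add_zero, add_vecMulVec, add_assoc]


lemma single_vecMulVec_single (a b : Fin n) (c d : A) :
    vecMulVec (Pi.single a c) (Pi.single b d) = Matrix.single a b (c * d) := by
  ext p q
  simp only [vecMulVec_apply, Pi.single_apply, Matrix.single, of_apply]
  by_cases hp : p = a <;> by_cases hq : q = b <;>
    simp [hp, hq, eq_comm (a := a) (b := p), eq_comm (a := b) (b := q)]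

/-- Row lemma: `1 + (single a c) wᵀ` is elementary when `w a = 0`. -/
lemma isE_row_aux (a : Fin n) (c : A) (s : Finset (Fin n)) :
    ∀ w : Fin n → A, (∀ m, w m ≠ 0 → m ∈ s) → w a = 0 →
      IsE n A (1 + vecMulVec (Pi.single a c) w) := by
  induction s using Finset.cons_induction with
  | empty =>
    intro w hs _
    have hw : w = 0 := funext fun m => by
      by_contra h; exact absurd (hs m h) (Finset.notMem_empty m)
    rw [hw, vecMulVec_zero, add_zero]
    exact isE_one
  | cons b s hb ih =>
    intro w hs ha
    by_cases hba : b = a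
    · subst hba
      refine ih w (fun m hm => ?_) ha
      rcases Finset.mem_cons.1 (hs m hm) with h | h
      · exact absurd (h ▸ ha) hm
      · exact h
    · set w' := Function.update w b 0 with hw'
      have hw'a : w' a = 0 := by
        rw [hw', Function.update_of_ne (fun h => hba h.symm)]
        exact ha
      have hsplit : w = w' + Pi.single b (w b) := by
        funext m
        by_cases hm : m = b
        · subst hm; simp [hw']
        · simp [hw', Function.update_of_ne hm, Pi.single_eq_of_ne hm]
      have h1 : IsE n A (1 + vecMulVec (Pi.single a c) w') := by
        refine ih w' (fun m hm => ?_) hw'a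
        have hmb : m ≠ b := fun h => by simp [hw', h] at hm
        have := hs m (by rwa [hw', Function.update_of_ne hmb] at hm)
        exact (Finset.mem_cons.1 this).resolve_left hmb
      have h2 : IsE n A (1 + vecMulVec (Pi.single a c) (Pi.single b (w b))) := by
        have he : vecMulVec (Pi.single a c) (Pi.single b (w b))
            = Matrix.single a b (c * w b) := by
          ext p q
          simp only [vecMulVec_apply, Pi.single_apply, Matrix.single, of_apply]
          by_cases hp : p = a <;> by_cases hq : q = b <;>
            simp [hp, hq, eq_comm (a := a) (b := p), eq_comm (a := b) (b := q)]
        rw [he]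
        exact isE_transvection a b (fun h => hba h.symm) (c * w b)
      have hd : w' ⬝ᵥ Pi.single a c = 0 := by
        rw [dotProduct_single, hw'a, zero_mul]
      rw [hsplit, ← key_mul _ _ _ hd]
      exact isE_mul h1 h2

lemma isE_row (a : Fin n) (c : A) (w : Fin n → A) (ha : w a = 0) :
    IsE n A (1 + vecMulVec (Pi.single a c) w) :=
  isE_row_aux a c Finset.univ w (fun m _ => Finset.mem_univ m) ha

/-- Disjoint support lemma. -/
lemma isE_disjoint_aux (w : Fin n → A) (s : Finset (Fin n)) :
    ∀ z : Fin n → A, (∀ m, z m ≠ 0 → m ∈ s) → (∀ m, z m = 0 ∨ w m = 0) →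
      IsE n A (1 + vecMulVec z w) := by
  induction s using Finset.cons_induction with
  | empty =>
    intro z hs _
    have hz : z = 0 := funext fun m => by
      by_contra h; exact absurd (hs m h) (Finset.notMem_empty m)
    rw [hz, zero_vecMulVec, add_zero]
    exact isE_one
  | cons b s hb ih =>
    intro z hs hzw
    set z' := Function.update z b 0 with hz'
    have h1 : IsE n A (1 + vecMulVec z' w) := by
      refine ih z' (fun m hm => ?_) (fun m => ?_)
      · have hmb : m ≠ b := fun h => by simp [hz', h] at hm
        have := hs m (by rwa [hz', Function.update_of_ne hmb] at hm)
        exact (Finset.mem_cons.1 this).resolve_left hmb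
      · by_cases hm : m = b
        · left; simp [hz', hm]
        · rw [hz', Function.update_of_ne hm]; exact hzw m
    have h2 : IsE n A (1 + vecMulVec (Pi.single b (z b)) w) := by
      rcases hzw b with h | h
      · rw [h, Pi.single_zero, zero_vecMulVec, add_zero]; exact isE_one
      · exact isE_row b (z b) w h
    have hd : w ⬝ᵥ z' = 0 := by
      apply Finset.sum_eq_zero
      intro m _
      by_cases hm : m = b
      · simp [hz', hm]
      · rw [hz', Function.update_of_ne hm]
        rcases hzw m with h | h
        · rw [h, mul_zero]
        · rw [h, zero_mul]
    have hsplit : z = Pi.single b (z b) + z' := by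
      funext m
      by_cases hm : m = b
      · subst hm; simp [hz']
      · simp [hz', Function.update_of_ne hm, Pi.single_eq_of_ne hm]
    rw [hsplit, ← key_mul' _ _ _ hd]
    exact isE_mul h2 h1

lemma isE_disjoint (z w : Fin n → A) (h : ∀ m, z m = 0 ∨ w m = 0) :
    IsE n A (1 + vecMulVec z w) :=
  isE_disjoint_aux w Finset.univ z (fun m _ => Finset.mem_univ m) h

/-- Sum lemma. -/
lemma isE_sum {ι : Type*} (z : Fin n → A) (s : Finset ι) (f : ι → Fin n → A)
    (h0 : ∀ p ∈ s, f p ⬝ᵥ z = 0) (hE : ∀ p ∈ s, IsE n A (1 + vecMulVec z (f p))) :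
    IsE n A (1 + vecMulVec z (∑ p ∈ s, f p)) := by
  induction s using Finset.cons_induction with
  | empty => rw [Finset.sum_empty, vecMulVec_zero, add_zero]; exact isE_one
  | cons a s ha ih =>
    rw [Finset.sum_cons, ← key_mul z (f a) _ (h0 a (Finset.mem_cons_self a s))]
    exact isE_mul (hE a (Finset.mem_cons_self a s))
      (ih (fun p hp => h0 p (Finset.mem_cons_of_mem hp))
          (fun p hp => hE p (Finset.mem_cons_of_mem hp)))

/-- Whitehead-style commutator trick (Lemma A). -/
lemma isE_orth (z w : Fin n → A) (m : Fin n) (h0 : w ⬝ᵥ z = 0)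
    (hz : z m = 0) (hw : w m = 0) : IsE n A (1 + vecMulVec z w) := by
  set P := vecMulVec z (Pi.single m 1) with hPdef
  set Q := vecMulVec (Pi.single m 1) w with hQdef
  have hPP : P * P = 0 := by
    rw [hPdef, vecMulVec_mul_vecMulVec, single_dotProduct, hz, mul_zero, zero_smul]
  have hQQ : Q * Q = 0 := by
    rw [hQdef, vecMulVec_mul_vecMulVec, dotProduct_single, hw, zero_mul, zero_smul]
  have hQP : Q * P = 0 := by
    rw [hQdef, hPdef, vecMulVec_mul_vecMulVec, h0, zero_smul]
  have hPQ : P * Q = vecMulVec z w := by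
    rw [hPdef, hQdef, vecMulVec_mul_vecMulVec, dotProduct_single, Pi.single_eq_same,
      mul_one, one_smul]
  set R := P * Q with hRdef
  have hPR : P * R = 0 := by rw [hRdef, ← mul_assoc, hPP, zero_mul]
  have hQR : Q * R = 0 := by rw [hRdef, ← mul_assoc, hQP, zero_mul]
  have hRP : R * P = 0 := by rw [hRdef, mul_assoc, hQP, mul_zero]
  have hRQ : R * Q = 0 := by rw [hRdef, mul_assoc, hQQ, mul_zero]
  have hRR : R * R = 0 := by rw [hRdef, mul_assoc, ← mul_assoc Q, hQP, zero_mul, mul_zero]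
  have key : ((1 + P) * (1 + Q)) * ((1 + -P) * (1 + -Q)) = 1 + vecMulVec z w := by
    have e1 : (1 + P) * (1 + Q) = 1 + P + Q + R := by rw [hRdef]; noncomm_ring
    have e2 : (1 + -P) * (1 + -Q) = 1 + -P + -Q + R := by rw [hRdef]; noncomm_ring
    rw [e1, e2, ← hPQ]
    simp only [mul_add, add_mul, mul_neg, neg_mul, mul_one, one_mul, neg_neg,
      hPP, hQQ, hQP, hPR, hQR, hRP, hRQ, hRR, neg_zero, add_zero, zero_add]
    abel
  have hA : IsE n A (1 + P) := by
    rw [hPdef]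
    refine isE_disjoint z (Pi.single m 1) (fun k => ?_)
    by_cases hk : k = m
    · left; rw [hk]; exact hz
    · right; exact Pi.single_eq_of_ne hk 1
  have hB : IsE n A (1 + Q) := by rw [hQdef]; exact isE_row m 1 w hw
  have hC : IsE n A (1 + -P) := by
    rw [hPdef, ← neg_vecMulVec]
    refine isE_disjoint (-z) (Pi.single m 1) (fun k => ?_)
    by_cases hk : k = m
    · left; rw [hk]; simp [hz]
    · right; exact Pi.single_eq_of_ne hk 1
  have hD : IsE n A (1 + -Q) := by
    have : -Q = vecMulVec (Pi.single m 1) (-w) := by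
      rw [hQdef]; ext i j; simp [vecMulVec_apply]
    rw [this]
    exact isE_row m 1 (-w) (by simp [hw])
  rw [← key]
  exact isE_mul (isE_mul hA hB) (isE_mul hC hD)

/-- Lemma C: `1 + v · (b(v_k e_l − v_l e_k))ᵀ` is elementary (needs `3 ≤ n`). -/
lemma isE_pair (hn : 3 ≤ n) (v : Fin n → A) (k l : Fin n) (b : A) :
    IsE n A (1 + vecMulVec v (Pi.single l (b * v k) - Pi.single k (b * v l))) := by
  rcases eq_or_ne k l with rfl | hkl
  · simp only [sub_self, vecMulVec_zero, add_zero]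
    exact isE_one
  · -- find a third index
    obtain ⟨m, hm⟩ : ∃ m : Fin n, m ∉ ({k, l} : Finset (Fin n)) := by
      by_contra h
      push_neg at h
      have h1 : (Finset.univ : Finset (Fin n)).card ≤ ({k, l} : Finset (Fin n)).card :=
        Finset.card_le_card (fun x _ => h x)
      have h2 : ({k, l} : Finset (Fin n)).card ≤ 2 :=
        (Finset.card_insert_le _ _).trans (by simp)
      simp only [Finset.card_univ, Fintype.card_fin] at h1
      omega
    have hmk : m ≠ k := fun h => hm (by simp [h])
    have hml : m ≠ l := fun h => hm (by simp [h])
    set w : Fin n → A := Pi.single l (b * v k) - Pi.single k (b * v l) with hwdef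
    have hwk : w k = -(b * v l) := by
      simp [hwdef, Pi.single_eq_of_ne hkl]
    have hwl : w l = b * v k := by
      simp [hwdef, Pi.single_eq_of_ne (Ne.symm hkl)]
    have hwm : w m = 0 := by
      simp [hwdef, Pi.single_eq_of_ne hml, Pi.single_eq_of_ne hmk]
    set y : Fin n → A := Pi.single k (v k) + Pi.single l (v l) with hydef
    have hyk : y k = v k := by simp [hydef, Pi.single_eq_of_ne hkl]
    have hyl : y l = v l := by simp [hydef, Pi.single_eq_of_ne (Ne.symm hkl)]
    have hym : y m = 0 := by simp [hydef, Pi.single_eq_of_ne hmk, Pi.single_eq_of_ne hml]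
    have hwy : w ⬝ᵥ y = 0 := by
      rw [hydef, dotProduct_add, dotProduct_single, dotProduct_single, hwk, hwl]
      ring
    have hprod := key_mul' (v - y) y w hwy
    rw [sub_add_cancel] at hprod
    rw [← hprod]
    refine isE_mul (isE_disjoint (v - y) w (fun p => ?_)) (isE_orth y w m hwy hym hwm)
    by_cases hpk : p = k
    · left; subst hpk; simp [hyk]
    · by_cases hpl : p = l
      · left; subst hpl; simp [hyl]
      · right; simp [hwdef, Pi.single_eq_of_ne hpl, Pi.single_eq_of_ne hpk]


lemma mul_vecMulVec (M : Matrix (Fin n) (Fin n) A) (x y : Fin n → A) :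
    M * vecMulVec x y = vecMulVec (M *ᵥ x) y := by
  ext p q
  simp only [mul_apply, vecMulVec_apply, mulVec, dotProduct, Finset.sum_mul]
  exact Finset.sum_congr rfl fun _ _ => by ring

lemma vecMulVec_mul (x y : Fin n → A) (M : Matrix (Fin n) (Fin n) A) :
    vecMulVec x y * M = vecMulVec x (y ᵥ* M) := by
  ext p q
  simp only [mul_apply, vecMulVec_apply, vecMul, dotProduct, Finset.mul_sum]
  exact Finset.sum_congr rfl fun _ _ => by ring

lemma isE_conj (hn : 3 ≤ n) (g : GL (Fin n) A) (i j : Fin n) (hij : i ≠ j) (a : A) :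
    IsE n A ((g : Matrix (Fin n) (Fin n) A) * Matrix.transvection i j a *
      ((g⁻¹ : GL (Fin n) A) : Matrix (Fin n) (Fin n) A)) := by
  set G : Matrix (Fin n) (Fin n) A := (g : Matrix (Fin n) (Fin n) A) with hGdef
  set Gi : Matrix (Fin n) (Fin n) A := ((g⁻¹ : GL (Fin n) A) : Matrix (Fin n) (Fin n) A)
    with hGidef
  have hGiG : Gi * G = 1 := g.inv_mul
  have hGGi : G * Gi = 1 := g.mul_inv
  set z : Fin n → A := fun p => G p i with hzdef
  set u : Fin n → A := fun q => a * Gi j q with hudef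
  set c : Fin n → A := fun p => Gi i p with hcdef
  have huz : u ⬝ᵥ z = 0 := by
    have h1 : u ⬝ᵥ z = a * ∑ p, Gi j p * G p i := by
      simp [dotProduct, hudef, hzdef, Finset.mul_sum, mul_assoc]
    rw [h1, ← mul_apply, hGiG, one_apply_ne (Ne.symm hij), mul_zero]
  have hcz : c ⬝ᵥ z = 1 := by
    have h1 : c ⬝ᵥ z = ∑ p, Gi i p * G p i := by simp [dotProduct, hcdef, hzdef]
    rw [h1, ← mul_apply, hGiG, one_apply_eq]
  have hM : G * Matrix.transvection i j a * Gi = 1 + vecMulVec z u := by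
    have h1 : Matrix.transvection i j a
        = 1 + vecMulVec (Pi.single i 1) (Pi.single j a) := by
      rw [single_vecMulVec_single, one_mul]
      rfl
    have h2 : G * (1 + vecMulVec (Pi.single i 1) (Pi.single j a)) * Gi
        = G * Gi + G * vecMulVec (Pi.single i 1) (Pi.single j a) * Gi := by
      noncomm_ring
    rw [h1, h2, hGGi, mul_vecMulVec, vecMulVec_mul, mulVec_single, single_vecMul]
    congr 1
    ext p q
    simp [vecMulVec_apply, hzdef, hudef]
  rw [hM]
  have hu : ∑ p : Fin n × Fin n, (Pi.single p.2 ((c p.1 * u p.2) * z p.1)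
      - Pi.single p.1 ((c p.1 * u p.2) * z p.2)) = u := by
    funext q
    rw [Finset.sum_apply]
    simp only [Pi.sub_apply, Pi.single_apply]
    rw [Fintype.sum_prod_type]
    simp only [Finset.sum_sub_distrib]
    have hS1 : (∑ k : Fin n, ∑ l : Fin n,
        if q = l then c k * u l * z k else 0) = u q := by
      have e1 : ∀ k : Fin n, (∑ l : Fin n, if q = l then c k * u l * z k else 0)
          = c k * u q * z k := by
        intro k
        rw [Finset.sum_ite_eq]
        simp
      rw [Finset.sum_congr rfl (fun k _ => e1 k)]
      have e2 : (∑ k : Fin n, c k * u q * z k) = u q * (c ⬝ᵥ z) := by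
        rw [dotProduct, Finset.mul_sum]
        exact Finset.sum_congr rfl fun _ _ => by ring
      rw [e2, hcz, mul_one]
    have hS2 : (∑ k : Fin n, ∑ l : Fin n,
        if q = k then c k * u l * z l else 0) = 0 := by
      rw [Finset.sum_comm]
      have e1 : ∀ l : Fin n, (∑ k : Fin n, if q = k then c k * u l * z l else 0)
          = c q * u l * z l := by
        intro l
        rw [Finset.sum_ite_eq]
        simp
      rw [Finset.sum_congr rfl (fun l _ => e1 l)]
      have e2 : (∑ l : Fin n, c q * u l * z l) = c q * (u ⬝ᵥ z) := by
        rw [dotProduct, Finset.mul_sum]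
        exact Finset.sum_congr rfl fun _ _ => by ring
      rw [e2, huz, mul_zero]
    rw [hS1, hS2, sub_zero]
  rw [← hu]
  refine isE_sum z Finset.univ _ (fun p _ => ?_) (fun p _ => ?_)
  · rw [sub_dotProduct, single_dotProduct, single_dotProduct]
    ring
  · exact isE_pair hn z p.1 p.2 (c p.1 * u p.2)


end ElemGLAux

open ElemGLAux in
theorem elemGL_normal (n : ℕ) (hn : 3 ≤ n) (A : Type*) [CommRing A] :
    (elemGL n A).Normal := by
  constructor
  intro x hx g
  have hle : (elemGL n A).map (MulAut.conj g).toMonoidHom ≤ elemGL n A := by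
    rw [elemGL, MonoidHom.map_closure]
    refine (Subgroup.closure_le _).2 ?_
    rintro y ⟨t, ⟨i, j, a, hij, ht⟩, rfl⟩
    obtain ⟨u, hu, hu'⟩ := isE_conj hn g i j hij a
    have heq : (MulAut.conj g).toMonoidHom t = u := by
      apply Units.ext
      rw [hu']
      simp [Units.val_mul, ht]
    show (MulAut.conj g).toMonoidHom t ∈ elemGL n A
    rw [heq]
    exact hu
  have hx' : g * x * g⁻¹ = (MulAut.conj g).toMonoidHom x := by
    simp [MulAut.conj_apply]
  rw [hx']
  exact hle (Subgroup.mem_map_of_mem _ hx)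
end

section
/- Let k be a field, A a semilocal regular domain containing k, and K the field of fractions of A. Then for n ≥ 3 the natural homomorphism GL_n(A)/E_n(A) → GL_n(K)/E_n(K) is injective; equivalently, every matrix in GL_n(A) that is a product of elementary matrices over K is already a product of elementary matrices over A. -/
open Matrix

/-- The homomorphism `GL_n(R) → GL_n(S)` induced by a ring homomorphism. -/
def glMap {n : ℕ} {R S : Type*} [CommRing R] [CommRing S] (f : R →+* S) :
    GL (Fin n) R →* GL (Fin n) S := Units.map (RingHom.mapMatrix f).toMonoidHom

/-- A regular local ring: a Noetherian local ring whose maximal ideal is generated by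
`dim R` elements. -/
def IsRegularLocalRingOld (R : Type*) [CommRing R] [IsLocalRing R] : Prop :=
  IsNoetherianRing R ∧ ∃ s : Finset R,
    Ideal.span (s : Set R) = IsLocalRing.maximalIdeal R ∧
      (s.card : WithBot ℕ∞) = ringKrullDim R

/-- A regular (commutative Noetherian) ring: all localizations at primes are regular local. -/
def IsRegularRingOld (R : Type*) [CommRing R] : Prop :=
  IsNoetherianRing R ∧ ∀ (p : Ideal R) (hp : p.IsPrime),
    IsRegularLocalRingOld (Localization.AtPrime p)

section Aux
variable {n : ℕ} {R : Type*} [CommRing R]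

def trGL (i j : Fin n) (hij : i ≠ j) (a : R) : GL (Fin n) R where
  val := transvection i j a
  inv := transvection i j (-a)
  val_inv := by rw [transvection_mul_transvection_same _ _ hij]; simp
  inv_val := by rw [transvection_mul_transvection_same _ _ hij]; simp


lemma step1 (i j : Fin n) (a b : R) :
    transvection i j a * transvection j i b =
      1 + Matrix.single i j a + Matrix.single j i b + Matrix.single i i (a*b) := by
  simp only [transvection, Matrix.add_mul, Matrix.mul_add, Matrix.one_mul, Matrix.mul_one,
    Matrix.single_mul_single_same]
  abel

lemma step2 (i j : Fin n) (hij : i ≠ j) (a b c : R) :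
    transvection i j a * transvection j i b * transvection i j c =
      1 + (Matrix.single i j a + Matrix.single i j c + Matrix.single i j (a*b*c))
        + Matrix.single j i b + Matrix.single i i (a*b) + Matrix.single j j (b*c) := by
  rw [step1 i j, transvection]
  simp only [Matrix.add_mul, Matrix.mul_add, Matrix.one_mul, Matrix.mul_one,
    Matrix.single_mul_single_same, Matrix.single_mul_single_of_ne _ _ _ _ hij.symm,
    Matrix.single_mul_single_of_ne _ _ _ _ hij]
  abel

lemma step3 (i j : Fin n) (hij : i ≠ j) (a b c d : R) :
    transvection i j a * transvection j i b * transvection i j c * transvection j i d =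
      1 + (Matrix.single i j a + Matrix.single i j c + Matrix.single i j (a*b*c))
        + (Matrix.single j i b + Matrix.single j i d + Matrix.single j i (b*c*d))
        + (Matrix.single i i (a*b) + Matrix.single i i (a*d) + Matrix.single i i (c*d)
            + Matrix.single i i (a*b*c*d))
        + Matrix.single j j (b*c) := by
  rw [step2 i j hij, transvection]
  simp only [Matrix.add_mul, Matrix.mul_add, Matrix.one_mul, Matrix.mul_one,
    Matrix.single_mul_single_same, Matrix.single_mul_single_of_ne _ _ _ _ hij.symm,
    Matrix.single_mul_single_of_ne _ _ _ _ hij]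
  ring_nf
  abel

lemma whitehead_matrix (i j : Fin n) (hij : i ≠ j) (u : Rˣ) :
    transvection i j ((u:R) - 1) * transvection j i 1 * transvection i j ((↑u⁻¹:R) - 1) *
      transvection j i (-(u:R)) =
    diagonal (fun x => if x = i then (u:R) else if x = j then (↑u⁻¹:R) else 1) := by
  rw [step3 i j hij]
  have h1 : (u:R) * (↑u⁻¹:R) = 1 := u.mul_inv
  have e1 : ((u:R) - 1) + ((↑u⁻¹:R) - 1) + ((u:R) - 1) * 1 * ((↑u⁻¹:R) - 1) = 0 := by
    linear_combination h1
  have e2 : (1:R) + (-(u:R)) + 1 * ((↑u⁻¹:R) - 1) * (-(u:R)) = 0 := by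
    linear_combination -h1
  have e3 : ((u:R) - 1) * 1 + ((u:R) - 1) * (-(u:R)) + ((↑u⁻¹:R) - 1) * (-(u:R))
      + ((u:R) - 1) * 1 * ((↑u⁻¹:R) - 1) * (-(u:R)) = (u:R) - 1 := by
    linear_combination (-(u:R)) * h1
  have e4 : (1:R) * ((↑u⁻¹:R) - 1) = (↑u⁻¹:R) - 1 := one_mul _
  rw [← Matrix.single_add, ← Matrix.single_add, e1,
      ← Matrix.single_add, ← Matrix.single_add, e2,
      ← Matrix.single_add, ← Matrix.single_add, ← Matrix.single_add, e3, e4]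
  ext a b
  simp only [Matrix.add_apply, Matrix.one_apply, Matrix.single, of_apply, diagonal_apply,
    Matrix.single_zero, Matrix.zero_apply]
  rcases eq_or_ne a i with rfl | hai <;> rcases eq_or_ne a j with rfl | haj <;>
    rcases eq_or_ne a b with rfl | hab <;> simp_all [Ne.symm]

lemma trGL_mem (i j : Fin n) (hij : i ≠ j) (a : R) : trGL i j hij a ∈ elemGL n R :=
  Subgroup.subset_closure ⟨i, j, a, hij, rfl⟩

/-- add `∑ i ∈ s, t i * (row i)` to row `e` -/
lemma row_sum_op (e : Fin n) (s : Finset (Fin n)) (he : e ∉ s) (t : Fin n → R)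
    (h : GL (Fin n) R) : ∃ l ∈ elemGL n R, ∀ a b,
      ((↑(l * h) : Matrix (Fin n) (Fin n) R)) a b =
        (↑h : Matrix (Fin n) (Fin n) R) a b +
          (if a = e then ∑ i ∈ s, t i * (↑h : Matrix (Fin n) (Fin n) R) i b else 0) := by
  classical
  induction s using Finset.induction with
  | empty => exact ⟨1, one_mem _, by simp⟩
  | @insert i s his ih =>
    obtain ⟨l, hl, hlh⟩ := ih (fun h' => he (Finset.mem_insert_of_mem h'))
    have hie : i ≠ e := fun h' => he (h' ▸ Finset.mem_insert_self i s)
    refine ⟨trGL e i hie.symm (t i) * l, mul_mem (trGL_mem _ _ _ _) hl, fun a b => ?_⟩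
    rw [mul_assoc, Units.val_mul]
    rcases eq_or_ne a e with hae | hae
    · rw [hae, show (trGL e i hie.symm (t i)).val = transvection e i (t i) from rfl,
        transvection_mul_apply_same, hlh, hlh]
      simp only [if_true, if_pos rfl, if_neg hie, add_zero, Finset.sum_insert his]
      ring
    · rw [show (trGL e i hie.symm (t i)).val = transvection e i (t i) from rfl,
        transvection_mul_apply_of_ne _ _ _ _ hae, hlh]
      simp [hae]

/-- add `c a * (row e)` to each row `a ∈ s` -/
lemma rows_add_op (e : Fin n) (s : Finset (Fin n)) (he : e ∉ s) (c : Fin n → R)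
    (h : GL (Fin n) R) : ∃ l ∈ elemGL n R, ∀ a b,
      ((↑(l * h) : Matrix (Fin n) (Fin n) R)) a b =
        (↑h : Matrix (Fin n) (Fin n) R) a b +
          (if a ∈ s then c a * (↑h : Matrix (Fin n) (Fin n) R) e b else 0) := by
  classical
  induction s using Finset.induction with
  | empty => exact ⟨1, one_mem _, by simp⟩
  | @insert i s his ih =>
    have hes : e ∉ s := fun h' => he (Finset.mem_insert_of_mem h')
    obtain ⟨l, hl, hlh⟩ := ih hes
    have hie : i ≠ e := fun h' => he (h' ▸ Finset.mem_insert_self i s)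
    refine ⟨trGL i e hie (c i) * l, mul_mem (trGL_mem _ _ _ _) hl, fun a b => ?_⟩
    rw [mul_assoc, Units.val_mul]
    rcases eq_or_ne a i with hai | hai
    · rw [hai, show (trGL i e hie (c i)).val = transvection i e (c i) from rfl,
        transvection_mul_apply_same, hlh, hlh]
      simp [his, hes, hie.symm, Finset.mem_insert]
    · rw [show (trGL i e hie (c i)).val = transvection i e (c i) from rfl,
        transvection_mul_apply_of_ne _ _ _ _ hai, hlh]
      simp only [Finset.mem_insert, hai, false_or]

/-- add `c b * (col e)` to each col `b ∈ s` -/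
lemma cols_add_op (e : Fin n) (s : Finset (Fin n)) (he : e ∉ s) (c : Fin n → R)
    (h : GL (Fin n) R) : ∃ r ∈ elemGL n R, ∀ a b,
      ((↑(h * r) : Matrix (Fin n) (Fin n) R)) a b =
        (↑h : Matrix (Fin n) (Fin n) R) a b +
          (if b ∈ s then c b * (↑h : Matrix (Fin n) (Fin n) R) a e else 0) := by
  classical
  induction s using Finset.induction with
  | empty => exact ⟨1, one_mem _, by simp⟩
  | @insert i s his ih =>
    have hes : e ∉ s := fun h' => he (Finset.mem_insert_of_mem h')
    obtain ⟨r, hr, hrh⟩ := ih hes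
    have hie : i ≠ e := fun h' => he (h' ▸ Finset.mem_insert_self i s)
    refine ⟨r * trGL e i hie.symm (c i), mul_mem hr (trGL_mem _ _ _ _), fun a b => ?_⟩
    rw [← mul_assoc, Units.val_mul]
    rcases eq_or_ne b i with hbi | hbi
    · rw [hbi, show (trGL e i hie.symm (c i)).val = transvection e i (c i) from rfl,
        mul_transvection_apply_same, hrh, hrh]
      simp [his, hes, hie.symm, Finset.mem_insert]
    · rw [show (trGL e i hie.symm (c i)).val = transvection e i (c i) from rfl,
        mul_transvection_apply_of_ne _ _ _ _ hbi, hrh]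
      simp only [Finset.mem_insert, hbi, false_or]


end Aux


lemma semilocal_stable_range {A : Type*} [CommRing A]
    (hfin : Finite {I : Ideal A // I.IsMaximal}) {ι : Type*} (s : Finset ι)
    (a : A) (b : ι → A)
    (hcomb : ∃ (x : A) (c : ι → A), x * a + ∑ i ∈ s, c i * b i = 1) :
    ∃ t : ι → A, IsUnit (a + ∑ i ∈ s, t i * b i) := by
  classical
  set M := {I : Ideal A // I.IsMaximal}
  -- for each maximal ideal, a choice of coefficients avoiding it
  have key : ∀ m : M, ∃ τ : ι → A, a + ∑ i ∈ s, τ i * b i ∉ m.1 := by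
    intro m
    by_cases ha : a ∈ m.1
    · -- some b i ∉ m
      have : ∃ i ∈ s, b i ∉ m.1 := by
        by_contra hb
        push_neg at hb
        obtain ⟨x, c, hxc⟩ := hcomb
        have h1 : (1 : A) ∈ m.1 := by
          rw [← hxc]
          exact add_mem (m.1.mul_mem_left x ha)
            (Ideal.sum_mem _ fun i hi => m.1.mul_mem_left (c i) (hb i hi))
        exact m.2.ne_top ((Ideal.eq_top_iff_one m.1).2 h1)
      obtain ⟨i₀, hi₀s, hi₀⟩ := this
      refine ⟨fun i => if i = i₀ then 1 else 0, fun hmem => ?_⟩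
      rw [Finset.sum_eq_single i₀ (fun i _ hne => by simp [hne])
        (fun h => absurd hi₀s h)] at hmem
      simp only [if_true, if_pos rfl, one_mul] at hmem
      exact hi₀ ((Ideal.add_mem_iff_right m.1 ha).1 hmem)
    · exact ⟨0, by simpa using ha⟩
  choose τ hτ using key
  -- CRT: find t congruent to τ m mod each m
  have : Fintype M := Fintype.ofFinite M
  have hcop : Pairwise (Function.onFun IsCoprime fun m : M => m.1) := by
    intro m m' hmm'
    exact Ideal.isCoprime_iff_sup_eq.mpr
      (m.2.coprime_of_ne m'.2 (Subtype.coe_ne_coe.mpr hmm'))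
  have hsurj := Ideal.quotientInfToPiQuotient_surj hcop
  have key2 : ∀ i : ι, ∃ t : A, ∀ m : M, t - τ m i ∈ m.1 := by
    intro i
    obtain ⟨y, hy⟩ := hsurj (fun m => Ideal.Quotient.mk _ (τ m i))
    obtain ⟨t, rfl⟩ := Ideal.Quotient.mk_surjective y
    refine ⟨t, fun m => ?_⟩
    have := congrFun hy m
    rw [Ideal.quotientInfToPiQuotient_mk'] at this
    exact (Ideal.Quotient.eq).1 this
  choose t ht using key2
  refine ⟨t, ?_⟩
  by_contra hu
  obtain ⟨I, hI, hmem⟩ := exists_max_ideal_of_mem_nonunits hu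
  set m : M := ⟨I, hI⟩
  have h2 : (∑ i ∈ s, t i * b i) - (∑ i ∈ s, τ m i * b i) ∈ m.1 := by
    rw [← Finset.sum_sub_distrib]
    exact Ideal.sum_mem _ fun i hi => by
      rw [← sub_mul]; exact m.1.mul_mem_right _ (ht i m)
  have h3 : a + ∑ i ∈ s, τ m i * b i ∈ m.1 := by
    have : (a + ∑ i ∈ s, t i * b i) - ((∑ i ∈ s, t i * b i) - (∑ i ∈ s, τ m i * b i))
        = a + ∑ i ∈ s, τ m i * b i := by ring
    rw [← this]
    exact Ideal.sub_mem _ hmem h2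
  exact hτ m h3


section Aux2
variable {n : ℕ} {R : Type*} [CommRing R]

/-- first `k` rows and columns are zero off the diagonal -/
def Cleared (k : ℕ) (N : Matrix (Fin n) (Fin n) R) : Prop :=
  ∀ i j : Fin n, i ≠ j → (i.val < k ∨ j.val < k) → N i j = 0

lemma det_eq_one_of_mem_elemGL {g : GL (Fin n) R} (hg : g ∈ elemGL n R) :
    det (g : Matrix (Fin n) (Fin n) R) = 1 := by
  induction hg using Subgroup.closure_induction with
  | mem x hx => obtain ⟨i, j, a, hij, hx⟩ := hx; rw [hx]; exact det_transvection_of_ne i j hij a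
  | one => simp
  | mul x y _ _ hx hy => rw [Units.val_mul, det_mul, hx, hy, one_mul]
  | inv x _ hx =>
      have h2 : det ((x⁻¹ : GL (Fin n) R) : Matrix (Fin n) (Fin n) R)
          * det (x : Matrix (Fin n) (Fin n) R) = 1 := by
        rw [← det_mul, ← Units.val_mul, inv_mul_cancel, Units.val_one, det_one]
      rw [hx, mul_one] at h2; exact h2

end Aux2

section Step
variable {n : ℕ} {A : Type*} [CommRing A]

lemma step_clear (hfin : Finite {I : Ideal A // I.IsMaximal}) (k : ℕ) (hk : k < n)
    (g : GL (Fin n) A) (hgc : Cleared k (↑g : Matrix (Fin n) (Fin n) A)) :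
    ∃ l ∈ elemGL n A, ∃ r ∈ elemGL n A,
      Cleared (k+1) (↑(l * g * r) : Matrix (Fin n) (Fin n) A) := by
  classical
  set e : Fin n := ⟨k, hk⟩ with he_def
  set s : Finset (Fin n) := Finset.univ.filter (fun i => k < i.val) with hs_def
  have hes : e ∉ s := by simp [hs_def, he_def]
  have hmem_s : ∀ i : Fin n, i ∈ s ↔ k < i.val := by simp [hs_def]
  have hne_s : ∀ i : Fin n, i ∉ s → i ≠ e → i.val < k := by
    intro i hi hie
    rcases lt_trichotomy i.val k with h | h | h
    · exact h
    · exact absurd (Fin.ext h : i = e) hie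
    · exact absurd ((hmem_s i).2 h) hi
  have hse : ∀ i : Fin n, i ∈ s → i ≠ e := by
    intro i hi h; rw [h] at hi; exact hes hi
  have hek : e.val = k := rfl
  -- unimodularity of the partial column of g
  have hcomb : ∃ (x : A) (c : Fin n → A),
      x * (↑g : Matrix (Fin n) (Fin n) A) e e
        + ∑ i ∈ s, c i * (↑g : Matrix (Fin n) (Fin n) A) i e = 1 := by
    refine ⟨(↑g⁻¹ : Matrix (Fin n) (Fin n) A) e e,
      fun i => (↑g⁻¹ : Matrix (Fin n) (Fin n) A) e i, ?_⟩
    have h1 : ((↑g⁻¹ : Matrix (Fin n) (Fin n) A) * (↑g : Matrix (Fin n) (Fin n) A)) e e = 1 := by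
      rw [← Units.val_mul, inv_mul_cancel, Units.val_one, Matrix.one_apply_eq]
    rw [Matrix.mul_apply] at h1
    have h2 : ∑ j ∈ insert e s,
        (↑g⁻¹ : Matrix (Fin n) (Fin n) A) e j * (↑g : Matrix (Fin n) (Fin n) A) j e
        = ∑ j : Fin n,
        (↑g⁻¹ : Matrix (Fin n) (Fin n) A) e j * (↑g : Matrix (Fin n) (Fin n) A) j e := by
      apply Finset.sum_subset (Finset.subset_univ _)
      intro j _ hj
      have hje : j ≠ e := fun h => hj (h ▸ Finset.mem_insert_self _ _)
      have : (↑g : Matrix (Fin n) (Fin n) A) j e = 0 :=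
        hgc j e hje (Or.inl (hne_s j (fun h => hj (Finset.mem_insert_of_mem h)) hje))
      rw [this, mul_zero]
    rw [Finset.sum_insert hes] at h2
    rw [h2, h1]
  obtain ⟨t, hu⟩ := semilocal_stable_range hfin s
    ((↑g : Matrix (Fin n) (Fin n) A) e e) (fun i => (↑g : Matrix (Fin n) (Fin n) A) i e) hcomb
  set u : Aˣ := hu.unit with hu_def
  have hu_val : (u : A) = (↑g : Matrix (Fin n) (Fin n) A) e e
      + ∑ i ∈ s, t i * (↑g : Matrix (Fin n) (Fin n) A) i e := rfl
  -- Step 1: make the (e,e) entry a unit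
  obtain ⟨l₁, hl₁, hN₁⟩ := row_sum_op e s hes t g
  set h₁ := l₁ * g with h₁_def
  set N₁ : Matrix (Fin n) (Fin n) A := ↑h₁ with N₁_def
  have hN₁ee : N₁ e e = (u : A) := by rw [hN₁, if_pos rfl, hu_val]
  have hN₁c : Cleared k N₁ := by
    intro i j hij hlt
    rw [hN₁]
    rcases eq_or_ne i e with rfl | hie
    · have hjk : j.val < k := by
        rcases hlt with h | h
        · omega
        · exact h
      rw [if_pos rfl, hgc e j hij (Or.inr hjk)]
      rw [Finset.sum_eq_zero, add_zero]
      intro m hms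
      have : (↑g : Matrix (Fin n) (Fin n) A) m j = 0 := by
        apply hgc m j _ (Or.inr hjk)
        intro hmj
        have := (hmem_s m).1 hms
        omega
      rw [this, mul_zero]
    · rw [if_neg hie, add_zero]
      exact hgc i j hij hlt
  have hN₁row : ∀ a b, a ≠ e → N₁ a b = (↑g : Matrix (Fin n) (Fin n) A) a b := by
    intro a b ha
    rw [hN₁, if_neg ha, add_zero]
  -- Step 2: clear the column below/above
  obtain ⟨l₂, hl₂, hN₂⟩ := rows_add_op e s hes (fun i => -(N₁ i e * (↑u⁻¹ : A))) h₁
  set h₂ := l₂ * h₁ with h₂_def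
  set N₂ : Matrix (Fin n) (Fin n) A := ↑h₂ with N₂_def
  simp only [← N₁_def] at hN₂
  have hN₂rowe : ∀ b, N₂ e b = N₁ e b := by
    intro b
    rw [hN₂, if_neg hes, add_zero]
  have hN₂ee : N₂ e e = (u : A) := by rw [hN₂rowe, hN₁ee]
  have hN₂col : ∀ i, i ≠ e → N₂ i e = 0 := by
    intro i hie
    rw [hN₂]
    by_cases his : i ∈ s
    · rw [if_pos his, hN₁ee]
      have : (↑u⁻¹ : A) * (u : A) = 1 := u.inv_mul
      ring_nf
      rw [mul_assoc, this, mul_one]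
      ring
    · rw [if_neg his, add_zero]
      exact hN₁c i e hie (Or.inl (hne_s i his hie))
  have hN₂c : Cleared k N₂ := by
    intro i j hij hlt
    rw [hN₂]
    by_cases his : i ∈ s
    · have hjk : j.val < k := by
        rcases hlt with h | h
        · have := (hmem_s i).1 his; omega
        · exact h
      have h1 : N₁ i j = 0 := hN₁c i j hij hlt
      have h2 : N₁ e j = 0 := by
        apply hN₁c e j _ (Or.inr hjk)
        intro h; rw [← h] at hjk; omega
      rw [if_pos his, h1, h2, mul_zero, add_zero]
    · rw [if_neg his, add_zero]
      exact hN₁c i j hij hlt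
  -- Step 3: clear the row to the right
  obtain ⟨r, hr, hN₃⟩ := cols_add_op e s hes (fun j => -((↑u⁻¹ : A) * N₂ e j)) h₂
  set N₃ : Matrix (Fin n) (Fin n) A := ↑(h₂ * r) with N₃_def
  simp only [← N₂_def] at hN₃
  have hN₃off : ∀ a b, a ≠ e → N₃ a b = N₂ a b := by
    intro a b ha
    rw [hN₃]
    by_cases hbs : b ∈ s
    · rw [if_pos hbs, hN₂col a ha, mul_zero, add_zero]
    · rw [if_neg hbs, add_zero]
  have hN₃rowe : ∀ b, b ∈ s → N₃ e b = 0 := by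
    intro b hbs
    rw [hN₃, if_pos hbs, hN₂ee]
    have h5 : (↑u⁻¹ : A) * (u : A) = 1 := u.inv_mul
    linear_combination (-(N₂ e b)) * h5
  have hfinal : Cleared (k+1) N₃ := by
    intro i j hij hlt
    rcases eq_or_ne i e with rfl | hie
    · by_cases hjs : j ∈ s
      · exact hN₃rowe j hjs
      · have hjk : j.val < k := hne_s j hjs (Ne.symm hij)
        rw [hN₃, if_neg hjs, add_zero]
        exact hN₂c e j hij (Or.inr hjk)
    · rw [hN₃off i j hie]
      rcases eq_or_ne j e with rfl | hje
      · exact hN₂col i hie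
      · have : i.val < k ∨ j.val < k := by
          have hik : i.val ≠ k := fun h => hie (Fin.ext h)
          have hjk : j.val ≠ k := fun h => hje (Fin.ext h)
          omega
        exact hN₂c i j hij this
  refine ⟨l₂ * l₁, mul_mem hl₂ hl₁, r, hr, ?_⟩
  have : l₂ * l₁ * g * r = h₂ * r := by rw [h₂_def, h₁_def]; group
  rw [this]
  exact hfinal

end Step

section Final
variable {n : ℕ} {A : Type*} [CommRing A]

lemma clear_all (hfin : Finite {I : Ideal A // I.IsMaximal}) (g : GL (Fin n) A) :
    ∃ l ∈ elemGL n A, ∃ r ∈ elemGL n A,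
      Cleared n (↑(l * g * r) : Matrix (Fin n) (Fin n) A) := by
  suffices h : ∀ k : ℕ, k ≤ n → ∃ l ∈ elemGL n A, ∃ r ∈ elemGL n A,
      Cleared k (↑(l * g * r) : Matrix (Fin n) (Fin n) A) from h n le_rfl
  intro k
  induction k with
  | zero => exact fun _ => ⟨1, one_mem _, 1, one_mem _, fun i j _ h => by omega⟩
  | succ k ih =>
    intro hk
    obtain ⟨l, hl, r, hr, hc⟩ := ih (le_of_lt hk)
    obtain ⟨l', hl', r', hr', hc'⟩ := step_clear hfin k hk (l * g * r) hc
    refine ⟨l' * l, mul_mem hl' hl, r * r', mul_mem hr hr', ?_⟩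
    have : l' * l * g * (r * r') = l' * (l * g * r) * r' := by group
    rw [this]
    exact hc'

lemma whitehead_GL (i j : Fin n) (hij : i ≠ j) (u : Aˣ) :
    ∃ w ∈ elemGL n A, (↑w : Matrix (Fin n) (Fin n) A) =
      diagonal (fun x => if x = i then (u:A) else if x = j then (↑u⁻¹:A) else 1) := by
  refine ⟨trGL i j hij ((u:A) - 1) * trGL j i hij.symm 1 * trGL i j hij ((↑u⁻¹:A) - 1) *
    trGL j i hij.symm (-(u:A)), ?_, ?_⟩
  · exact mul_mem (mul_mem (mul_mem (trGL_mem _ _ _ _) (trGL_mem _ _ _ _))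
      (trGL_mem _ _ _ _)) (trGL_mem _ _ _ _)
  · rw [Units.val_mul, Units.val_mul, Units.val_mul]
    exact whitehead_matrix i j hij u

lemma diag_mem (hn : 2 ≤ n) (d : Fin n → A) (hd : ∀ i, IsUnit (d i))
    (hprod : ∏ i, d i = 1) (h : GL (Fin n) A)
    (hh : (↑h : Matrix (Fin n) (Fin n) A) = diagonal d) : h ∈ elemGL n A := by
  classical
  suffices key : ∀ k : ℕ, ∀ (h : GL (Fin n) A) (d : Fin n → A), (∀ i, IsUnit (d i)) →
      (↑h : Matrix (Fin n) (Fin n) A) = diagonal d → (∏ i, d i) = 1 →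
      (∀ i : Fin n, k ≤ i.val → d i = 1) → h ∈ elemGL n A by
    exact key n h d hd hh hprod (fun i hi => absurd i.isLt (by omega))
  intro k
  induction k with
  | zero =>
    intro h d _ hh hp h0
    have : (↑h : Matrix (Fin n) (Fin n) A) = 1 := by
      rw [hh]
      have : d = fun _ => 1 := funext fun i => h0 i (Nat.zero_le _)
      rw [this, diagonal_one]
    have h1 : h = 1 := Units.ext this
    rw [h1]; exact one_mem _
  | succ k ih =>
    intro h d hd hh hp hsupp
    by_cases hkn : n ≤ k
    · exact ih h d hd hh hp (fun i hi => absurd i.isLt (by omega))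
    push_neg at hkn
    rcases Nat.eq_zero_or_pos k with rfl | hk1
    · -- k = 0 : only d at index 0 possibly ≠ 1, but product is 1
      have h0 : ∀ i : Fin n, i.val ≠ 0 → d i = 1 := fun i hi => hsupp i (by omega)
      have hz : (0 : ℕ) < n := hkn
      have : ∏ i, d i = d ⟨0, hz⟩ := by
        apply Finset.prod_eq_single
        · intro i _ hi
          exact h0 i (fun h' => hi (Fin.ext h'))
        · intro h'; exact absurd (Finset.mem_univ _) h'
      have hd0 : d ⟨0, hz⟩ = 1 := by rw [← this, hp]
      apply ih h d hd hh hp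
      intro i _
      rcases Nat.eq_zero_or_pos i.val with h' | h'
      · rw [show i = ⟨0, hz⟩ from Fin.ext h']; exact hd0
      · exact h0 i (by omega)
    · -- 1 ≤ k < n
      set e : Fin n := ⟨k, hkn⟩ with he_def
      set f : Fin n := ⟨k - 1, by omega⟩ with hf_def
      have hfe : f ≠ e := by
        intro h'
        have := congrArg Fin.val h'
        simp [he_def, hf_def] at this
        omega
      set u : Aˣ := (hd e).unit with hu_def
      have hu_val : (u : A) = d e := (hd e).unit_spec
      obtain ⟨w, hw, hwval⟩ := whitehead_GL f e hfe u
      set δ : Fin n → A :=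
        fun x => if x = f then (u:A) else if x = e then (↑u⁻¹:A) else 1 with hδ_def
      have hδe : δ e = (↑u⁻¹ : A) := by simp only [hδ_def]; simp [hfe.symm]
      have hδf : δ f = (u : A) := by rw [hδ_def]; simp
      have hδo : ∀ x, x ≠ e → x ≠ f → δ x = 1 := by
        intro x hx1 hx2; simp only [hδ_def]; simp [hx1, hx2]
      set d' : Fin n → A := fun x => d x * δ x with hd'_def
      have hval : (↑(h * w) : Matrix (Fin n) (Fin n) A) = diagonal d' := by
        rw [Units.val_mul, hh, hwval, diagonal_mul_diagonal]
      have hprodδ : ∏ x, δ x = 1 := by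
        rw [← Finset.mul_prod_erase Finset.univ δ (Finset.mem_univ f), hδf,
          ← Finset.mul_prod_erase _ δ (Finset.mem_erase.2 ⟨hfe.symm, Finset.mem_univ e⟩), hδe]
        rw [Finset.prod_eq_one, mul_one, Units.mul_inv]
        intro x hx
        simp only [Finset.mem_erase] at hx
        exact hδo x hx.1 hx.2.1
      have hp' : ∏ i, d' i = 1 := by
        simp only [hd'_def]; rw [Finset.prod_mul_distrib, hp, hprodδ, one_mul]
      have hd'u : ∀ i, IsUnit (d' i) := by
        intro i
        simp only [hd'_def]
        apply (hd i).mul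
        simp only [hδ_def]
        by_cases h1 : i = f
        · rw [if_pos h1]; exact u.isUnit
        by_cases h2 : i = e
        · rw [if_neg h1, if_pos h2]; exact u⁻¹.isUnit
        · rw [if_neg h1, if_neg h2]; exact isUnit_one
      have hsupp' : ∀ i : Fin n, k ≤ i.val → d' i = 1 := by
        intro i hi
        rcases eq_or_ne i e with rfl | hie
        · simp only [hd'_def]
          rw [hδe, ← hu_val, Units.mul_inv]
        · have hif : i ≠ f := by
            intro h'
            have := congrArg Fin.val h'
            simp only [hf_def] at this
            omega
          have hik : k + 1 ≤ i.val := by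
            have : i.val ≠ k := fun h' => hie (Fin.ext h')
            omega
          simp only [hd'_def]
          rw [hδo i hie hif, mul_one]
          exact hsupp i hik
      have hhw : h * w ∈ elemGL n A := ih (h * w) d' hd'u hval hp' hsupp'
      have : h = (h * w) * w⁻¹ := by group
      rw [this]
      exact mul_mem hhw (inv_mem hw)

end Final

/-- Injectivity: for a semilocal regular domain `A` containing a field `k`, with fraction
field `K`, the map `GL_n(A)/E_n(A) → GL_n(K)/E_n(K)` is injective: a matrix over `A` that
becomes a product of elementary matrices over `K` is already elementary over `A`. -/
theorem K1_inj_fraction_field (n : ℕ) (hn : 3 ≤ n) (k : Type*) [Field k]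
    (A : Type*) [CommRing A] [IsDomain A] [Algebra k A]
    (hsemiloc : Finite {I : Ideal A // I.IsMaximal}) (hA : IsRegularRingOld A)
    (g : GL (Fin n) A)
    (hg : glMap (algebraMap A (FractionRing A)) g ∈ elemGL n (FractionRing A)) :
    g ∈ elemGL n A := by
  classical
  -- the determinant of `g` is `1`
  have hdetK := det_eq_one_of_mem_elemGL hg
  have hcoe : ((glMap (algebraMap A (FractionRing A)) g : GL (Fin n) (FractionRing A)) :
      Matrix (Fin n) (Fin n) (FractionRing A)) =
      (↑g : Matrix (Fin n) (Fin n) A).map (algebraMap A (FractionRing A)) := rfl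
  have hdet : det (↑g : Matrix (Fin n) (Fin n) A) = 1 := by
    apply IsFractionRing.injective A (FractionRing A)
    rw [RingHom.map_det, _root_.map_one]
    rw [hcoe] at hdetK
    exact hdetK
  -- clear `g` to a diagonal matrix
  obtain ⟨l, hl, r, hr, hc⟩ := clear_all hsemiloc g
  set N : Matrix (Fin n) (Fin n) A := (↑(l * g * r) : Matrix (Fin n) (Fin n) A) with hN_def
  set d : Fin n → A := fun i => N i i with hd_def
  have hdiag : N = diagonal d := by
    ext i j
    rcases eq_or_ne i j with rfl | hij
    · rw [diagonal_apply_eq]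
    · rw [diagonal_apply_ne _ hij]
      exact hc i j hij (Or.inl i.isLt)
  -- each diagonal entry is a unit
  have hdu : ∀ i, IsUnit (d i) := by
    intro i
    have h1 : (N * (↑(l * g * r)⁻¹ : Matrix (Fin n) (Fin n) A)) i i = 1 := by
      rw [hN_def, ← Units.val_mul, mul_inv_cancel, Units.val_one, Matrix.one_apply_eq]
    rw [Matrix.mul_apply] at h1
    rw [Finset.sum_eq_single i] at h1
    · exact IsUnit.of_mul_eq_one _ h1
    · intro b _ hb
      rw [hc i b (Ne.symm hb) (Or.inl i.isLt), zero_mul]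
    · intro h'; exact absurd (Finset.mem_univ _) h'
  -- product of diagonal entries is 1
  have hprod : ∏ i, d i = 1 := by
    have h1 : det N = 1 := by
      rw [hN_def, Units.val_mul, Units.val_mul, det_mul, det_mul,
        det_eq_one_of_mem_elemGL hl, det_eq_one_of_mem_elemGL hr, hdet]
      ring
    rw [hdiag, det_diagonal] at h1
    exact h1
  have hlr : l * g * r ∈ elemGL n A := diag_mem (by omega) d hdu hprod _ hdiag
  have : g = l⁻¹ * (l * g * r) * r⁻¹ := by group
  rw [this]
  exact mul_mem (mul_mem (inv_mem hl) hlr) (inv_mem hr)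
end

section
/- Let B → A be a ring homomorphism, h ∈ B with image f·u in A for a unit u, such that B/hB → A/fA is an isomorphism. Then for any b ∈ B whose image in B_h is a unit and whose image in A is a unit, b is a unit in B. -/
/-- Units are glued in a Nisnevich square: if `φ : B → A`, `h ∈ B`, `φ(h) = f·u` for a unit
`u`, and `B/hB → A/fA` is an isomorphism, then `b ∈ B` whose images in `B_h` and in `A` are
units is itself a unit. -/
theorem units_nisnevich_patching {B A : Type*} [CommRing B] [CommRing A]
    (φ : B →+* A) (h : B) (f : A) (u : Aˣ) (hfu : φ h = f * u)
    (hle : Ideal.span {h} ≤ (Ideal.span {f}).comap φ)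
    (hbij : Function.Bijective (Ideal.quotientMap (Ideal.span {f}) φ hle))
    (b : B) (hb1 : IsUnit (algebraMap B (Localization.Away h) b))
    (hb2 : IsUnit (φ b)) : IsUnit b := by
  -- Step 1: from `hb1`, there are `N` and `c` with `b * c = h ^ N`.
  have step1 : ∃ (N : ℕ) (c : B), b * c = h ^ N := by
    obtain ⟨v, hv⟩ := hb1
    obtain ⟨⟨c, s⟩, hcs⟩ := IsLocalization.surj (Submonoid.powers h)
      ((v⁻¹ : (Localization.Away h)ˣ) : Localization.Away h)
    have : algebraMap B (Localization.Away h) (b * c) = algebraMap B (Localization.Away h) s := by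
      rw [map_mul, ← hv]
      calc (v : Localization.Away h) * algebraMap B (Localization.Away h) c
          = v * (↑v⁻¹ * algebraMap B (Localization.Away h) s) := by rw [hcs]
        _ = algebraMap B (Localization.Away h) s := by
            rw [← mul_assoc, Units.mul_inv, one_mul]
    obtain ⟨m, hm⟩ := (IsLocalization.eq_iff_exists (Submonoid.powers h) _).mp this
    obtain ⟨k, hk⟩ := m.2
    obtain ⟨n, hn⟩ := s.2
    refine ⟨k + n, c * m, ?_⟩
    have : (m : B) * (b * c) = m * s := hm
    calc b * (c * m) = (m : B) * (b * c) := by ring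
      _ = m * s := this
      _ = h ^ (k + n) := by rw [← hk, ← hn, pow_add]
  obtain ⟨N, c, hbc⟩ := step1
  -- Step 2: `b` is a unit modulo `h`.
  have step2 : IsUnit (Ideal.Quotient.mk (Ideal.span {h}) b) := by
    set e := RingEquiv.ofBijective _ hbij with he
    have : Ideal.quotientMap (Ideal.span {f}) φ hle (Ideal.Quotient.mk (Ideal.span {h}) b)
        = Ideal.Quotient.mk (Ideal.span {f}) (φ b) := Ideal.quotientMap_mk
    have hu : IsUnit (e (Ideal.Quotient.mk (Ideal.span {h}) b)) := by
      show IsUnit (Ideal.quotientMap (Ideal.span {f}) φ hle (Ideal.Quotient.mk (Ideal.span {h}) b))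
      rw [this]
      exact hb2.map _
    have := hu.map e.symm
    rwa [RingEquiv.symm_apply_apply] at this
  -- Extract `d, t` with `b * d = 1 + h * t`.
  obtain ⟨w, hw⟩ := step2
  obtain ⟨d, hd⟩ := Ideal.Quotient.mk_surjective ((w⁻¹ : _ˣ) : B ⧸ Ideal.span {h})
  have hbd : Ideal.Quotient.mk (Ideal.span {h}) (b * d - 1) = 0 := by
    rw [map_sub, map_mul, hd, ← hw, map_one, Units.mul_inv, sub_self]
  rw [Ideal.Quotient.eq_zero_iff_mem, Ideal.mem_span_singleton] at hbd
  obtain ⟨t, ht⟩ := hbd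
  have ht' : b * d = 1 + h * t := by linear_combination ht
  -- Step 3: geometric series trick.
  have geom : (1 + h * t) * (∑ i ∈ Finset.range N, (-(h * t)) ^ i) = 1 - (-(h * t)) ^ N := by
    have := geom_sum_mul (-(h * t)) N
    have h2 : (-(h * t) - 1) = -(1 + h * t) := by ring
    rw [h2] at this
    calc (1 + h * t) * (∑ i ∈ Finset.range N, (-(h * t)) ^ i)
        = -((∑ i ∈ Finset.range N, (-(h * t)) ^ i) * (-(1 + h * t))) := by ring
      _ = -((-(h * t)) ^ N - 1) := by rw [this]
      _ = 1 - (-(h * t)) ^ N := by ring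
  refine IsUnit.of_mul_eq_one (a := b)
    (d * (∑ i ∈ Finset.range N, (-(h * t)) ^ i) + (-1) ^ N * c * t ^ N) ?_
  have hhn : (-(h * t)) ^ N = (-1) ^ N * (b * c) * t ^ N := by
    rw [hbc]; rw [← hbc]; rw [neg_pow, mul_pow]; rw [hbc]; ring
  calc b * (d * (∑ i ∈ Finset.range N, (-(h * t)) ^ i) + (-1) ^ N * c * t ^ N)
      = (b * d) * (∑ i ∈ Finset.range N, (-(h * t)) ^ i) + (-1) ^ N * (b * c) * t ^ N := by ring
    _ = (1 - (-(h * t)) ^ N) + (-1) ^ N * (b * c) * t ^ N := by rw [ht', geom]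
    _ = 1 := by rw [hhn]; ring
end
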